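/- Given nonzero complex numbers α₁, α₂, β₁, β₂, γ₁, γ₂ with γ₁γ₂ = (β₁β₂)/(α₁α₂), the matrices A = [[α₁, 0], [α₁ - β₁/γ₁, α₂]] and B = [[β₁, β₂ - α₂γ₁], [0, β₂]] satisfy: A has eigenvalues α₁, α₂; B has eigenvalues β₁, β₂; and BA⁻¹ has eigenvalues γ₁, γ₂. -/

import Mathlib

open Polynomial

lemma charpoly_roots_aux (a b : ℂ) (M : Matrix (Fin 2) (Fin 2) ℂ)
    (ht : M.trace = a + b) (hd : M.det = a * b) :
    M.charpoly.roots = {a, b} := by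
  have h : M.charpoly = (X - C a) * (X - C b) := by
    rw [Matrix.trace_fin_two] at ht
    rw [Matrix.det_fin_two] at hd
    have h1 : C (M 0 0) + C (M 1 1) = C a + C b := by
      rw [← map_add, ← map_add, ht]
    have h2 : C (M 0 0) * C (M 1 1) - C (M 0 1) * C (M 1 0) = C a * C b := by
      rw [← map_mul, ← map_mul, ← map_sub, ← map_mul, hd]
    rw [Matrix.charpoly, Matrix.det_fin_two]
    rw [Matrix.charmatrix_apply_eq, Matrix.charmatrix_apply_eq,
      Matrix.charmatrix_apply_ne _ _ _ (by decide), Matrix.charmatrix_apply_ne _ _ _ (by decide)]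
    linear_combination (-(X : ℂ[X])) * h1 + h2
  rw [h, Polynomial.roots_mul (mul_ne_zero (X_sub_C_ne_zero a) (X_sub_C_ne_zero b)),
    roots_X_sub_C, roots_X_sub_C]
  rfl

/-- the explicit `n = 2` solution. With `γ₁γ₂ = β₁β₂/(α₁α₂)`, the
matrices `A = [[α₁,0],[α₁ - β₁/γ₁, α₂]]` and `B = [[β₁, β₂ - α₂γ₁],[0, β₂]]` have
eigenvalue multisets `{α₁, α₂}`, `{β₁, β₂}`, and `B * A⁻¹` has eigenvalues
`{γ₁, γ₂}`. -/
theorem stmt6 (α₁ α₂ β₁ β₂ γ₁ γ₂ : ℂ)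
    (hα₁ : α₁ ≠ 0) (hα₂ : α₂ ≠ 0) (hβ₁ : β₁ ≠ 0) (hβ₂ : β₂ ≠ 0)
    (hγ₁ : γ₁ ≠ 0) (hγ₂ : γ₂ ≠ 0)
    (hdet : γ₁ * γ₂ = β₁ * β₂ / (α₁ * α₂))
    (A B : Matrix (Fin 2) (Fin 2) ℂ)
    (hA : A = !![α₁, 0; α₁ - β₁ / γ₁, α₂])
    (hB : B = !![β₁, β₂ - α₂ * γ₁; 0, β₂]) :
    A.charpoly.roots = {α₁, α₂} ∧
    B.charpoly.roots = {β₁, β₂} ∧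
    (B * A⁻¹).charpoly.roots = {γ₁, γ₂} := by
  have hdet' : γ₁ * γ₂ * (α₁ * α₂) = β₁ * β₂ := by
    field_simp at hdet; linear_combination hdet
  have hAinv : A⁻¹ = !![α₁⁻¹, 0; (β₁ / γ₁ - α₁) / (α₁ * α₂), α₂⁻¹] := by
    apply Matrix.inv_eq_right_inv
    rw [hA]
    ext i j
    fin_cases i <;> fin_cases j <;>
      simp [Matrix.mul_apply, Fin.sum_univ_two] <;> field_simp <;> ring
  refine ⟨?_, ?_, ?_⟩
  · exact charpoly_roots_aux α₁ α₂ A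
      (by rw [hA]; simp [Matrix.trace_fin_two])
      (by rw [hA]; simp [Matrix.det_fin_two])
  · exact charpoly_roots_aux β₁ β₂ B
      (by rw [hB]; simp [Matrix.trace_fin_two])
      (by rw [hB]; simp [Matrix.det_fin_two])
  · apply charpoly_roots_aux γ₁ γ₂
    · rw [hB, hAinv]
      simp only [Matrix.trace_fin_two, Matrix.mul_apply, Fin.sum_univ_two,
        Matrix.cons_val', Matrix.cons_val_zero, Matrix.cons_val_one, Matrix.head_cons,
        Matrix.empty_val', Matrix.cons_val_fin_one, Matrix.head_fin_const, Matrix.of_apply]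
      field_simp
      linear_combination -hdet'
    · rw [Matrix.det_mul, hB, hAinv]
      simp [Matrix.det_fin_two]
      field_simp
      linear_combination -hdet'
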